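/- Let A = A₀ ⊕ A₁ be a ℤ/2-graded commutative ring, X a set, σ : X → X a map, c ∈ A₀, and P : X² → A₀ symmetric, G : X² → A₀, S : X² → A₀ antisymmetric, F : X² → A₁, λ_K, ω_K : X → A₀, ω̂_K : X → A₁. Assume the monodromy rules: for all x, y ∈ X, P(σx, y) = P(x,y) − c·λ_K(y), G(x, σy) = G(x,y) + c·ω_K(x), and F(x, σy) = F(x,y) − c·ω̂_K(x). Define Π^{(n+2)}, Π_F^{(n+2)} by the linear chain formulas and Π_K^{(n+1)}(t_1;t_2,…,t_n;s) := λ_K(t_1)·G^n(t_1,…,t_n,s) + ω_K(t_1)·Π^{(n+1)}(t_1;t_2,…,t_n;s) − ω̂_K(t_1)·Π_F^{(n+1)}(t_1;t_2,…,t_n;s). Then for all n ≥ 1 and points r, t_1,…,t_n, s: Π^{(n+2)}(σr; t_1,…,t_n; s) − Π^{(n+2)}(r; t_1,…,t_n; s) = −c · Π_K^{(n+1)}(t_1; t_2,…,t_n; s). -/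

import Mathlib

/-- Ordered path product `f(x₀,x₁) f(x₁,x₂) ⋯ f(x_{k−1},x_k)` starting at `x`
through the list of subsequent points; the empty product is `1`. -/
def pathProd {A X : Type*} [Monoid A] (f : X → X → A) : X → List X → A
  | _, [] => 1
  | x, y :: l => f x y * pathProd f y l

@[simp] lemma pathProd_nil {A X : Type*} [Monoid A] (f : X → X → A) (x : X) :
    pathProd f x [] = 1 := rfl

@[simp] lemma pathProd_cons {A X : Type*} [Monoid A] (f : X → X → A) (x y : X) (l : List X) :
    pathProd f x (y :: l) = f x y * pathProd f y l := rfl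

lemma pathProd_concat {A X : Type*} [Monoid A] (f : X → X → A) (x y : X) (l : List X) :
    pathProd f x (l ++ [y]) = pathProd f x l * f (l.getLastD x) y := by
  induction l generalizing x with
  | nil => simp
  | cons a l ih =>
    simp only [List.cons_append, pathProd_cons, ih a, mul_assoc]
    congr 2
    cases l <;> simp [List.getLastD]

lemma map_getD_range {X : Type*} (l : List X) (d : X) :
    (List.range l.length).map (fun i => l.getD i d) = l := by
  induction l with
  | nil => simp
  | cons a l ih =>
    simp only [List.length_cons, List.range_succ_eq_map, List.map_cons, List.map_map,
      List.getD_cons_zero, List.cons.injEq, true_and]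
    have h2 : List.map ((fun i => (a :: l).getD i d) ∘ Nat.succ) (List.range l.length)
        = List.map (fun i => l.getD i d) (List.range l.length) :=
      List.map_congr_left (fun i _ => by simp)
    rw [h2, ih]

lemma range'_succ_map {X : Type*} (pt q : ℕ → X) (h : ∀ i, pt (i + 1) = q i) (a k : ℕ) :
    (List.range' (a + 1) k).map pt = (List.range' a k).map q := by
  rw [List.range'_eq_map_range, List.range'_eq_map_range, List.map_map, List.map_map]
  apply List.map_congr_left
  intro i _
  simp only [Function.comp]
  rw [show a + 1 + i = (a + i) + 1 by omega, h]

lemma revrange_map {X : Type*} (pt q : ℕ → X) (h : ∀ i, pt (i + 1) = q i) (k : ℕ) :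
    ((List.range (k + 1)).reverse.map pt) = ((List.range k).reverse.map q) ++ [pt 0] := by
  rw [List.range_succ_eq_map, List.reverse_cons, List.map_append, List.map_reverse,
    List.map_reverse, List.map_map]
  congr 1
  congr 1
  apply List.map_congr_left
  intro i _
  simp [Function.comp, h]

lemma revrange_getLastD {X : Type*} (q : ℕ → X) (k : ℕ) (d : X) (hd : k = 0 → d = q 0) :
    ((List.range k).reverse.map q).getLastD d = q 0 := by
  cases k with
  | zero => simp [hd rfl]
  | succ k =>
    rw [revrange_map q (fun i => q (i + 1)) (fun _ => rfl) k]
    simp [List.getLastD_concat]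

lemma revchain_split {A X : Type*} [Monoid A] (f : X → X → A) (pt q : ℕ → X)
    (h : ∀ i, pt (i + 1) = q i) (k : ℕ) :
    pathProd f (pt (k + 1)) ((List.range (k + 1)).reverse.map pt)
      = pathProd f (q k) ((List.range k).reverse.map q) * f (q 0) (pt 0) := by
  rw [revrange_map pt q h k, pathProd_concat, h]
  congr 2
  exact revrange_getLastD q k (q k) (fun hk => by rw [hk])

/-- The fundamental linear chain block
`Π^{(n+2)}(r;t₁,…,tₙ;s) = ∑_{α=0}^{n} (−1)^α G^α(t_α,…,t₁,r) P(t_α,t_{α+1}) G^{n−α}(t_{α+1},…,tₙ,s)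
 − ∑_{α=0}^{n−1} ∑_{β=0}^{n−1−α} (−1)^α G^α(t_α,…,t₁,r) F(t_{α+1},t_α)
   S^β(t_{α+1},…,t_{α+β+1}) F(t_{α+β+1},t_{α+β+2}) G^{n−1−α−β}(t_{α+β+2},…,tₙ,s)`,
with `t₀ := r`, `t_{n+1} := s`. -/
def PiBlock {A X : Type*} [Ring A] (P G S F : X → X → A)
    (r : X) (ts : List X) (s : X) : A :=
  let n := ts.length
  let pt : ℕ → X := fun i => (r :: (ts ++ [s])).getD i s
  (∑ α ∈ Finset.range (n + 1),
      (-1 : A) ^ α * pathProd G (pt α) ((List.range α).reverse.map pt)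
        * P (pt α) (pt (α + 1))
        * pathProd G (pt (α + 1)) ((List.range' (α + 2) (n - α)).map pt))
  - (∑ α ∈ Finset.range n, ∑ β ∈ Finset.range (n - α),
      (-1 : A) ^ α * pathProd G (pt α) ((List.range α).reverse.map pt)
        * F (pt (α + 1)) (pt α)
        * pathProd S (pt (α + 1)) ((List.range' (α + 2) β).map pt)
        * F (pt (α + β + 1)) (pt (α + β + 2))
        * pathProd G (pt (α + β + 2)) ((List.range' (α + β + 3) (n - 1 - α - β)).map pt))

/-- The fermionic linear chain block
`Π_F^{(n+2)}(r;t₁,…,tₙ;s) = ∑_{α=0}^{n} S^α(r,t₁,…,t_α) F(t_α,t_{α+1}) G^{n−α}(t_{α+1},…,tₙ,s)`,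
with `t₀ := r`, `t_{n+1} := s`. -/
def PiFBlock {A X : Type*} [Ring A] (S F G : X → X → A)
    (r : X) (ts : List X) (s : X) : A :=
  let n := ts.length
  let pt : ℕ → X := fun i => (r :: (ts ++ [s])).getD i s
  ∑ α ∈ Finset.range (n + 1),
    pathProd S (pt 0) ((List.range' 1 α).map pt)
      * F (pt α) (pt (α + 1))
      * pathProd G (pt (α + 1)) ((List.range' (α + 2) (n - α)).map pt)

def S1blk {A X : Type*} [Ring A] (P G : X → X → A) (pt : ℕ → X) (n : ℕ) : A :=
  ∑ α ∈ Finset.range (n + 1),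
    (-1 : A) ^ α * pathProd G (pt α) ((List.range α).reverse.map pt)
      * P (pt α) (pt (α + 1))
      * pathProd G (pt (α + 1)) ((List.range' (α + 2) (n - α)).map pt)

def S2blk {A X : Type*} [Ring A] (G S F : X → X → A) (pt : ℕ → X) (n : ℕ) : A :=
  ∑ α ∈ Finset.range n, ∑ β ∈ Finset.range (n - α),
    (-1 : A) ^ α * pathProd G (pt α) ((List.range α).reverse.map pt)
      * F (pt (α + 1)) (pt α)
      * pathProd S (pt (α + 1)) ((List.range' (α + 2) β).map pt)
      * F (pt (α + β + 1)) (pt (α + β + 2))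
      * pathProd G (pt (α + β + 2)) ((List.range' (α + β + 3) (n - 1 - α - β)).map pt)

def SFblk {A X : Type*} [Ring A] (S F G : X → X → A) (pt : ℕ → X) (n : ℕ) : A :=
  ∑ α ∈ Finset.range (n + 1),
    pathProd S (pt 0) ((List.range' 1 α).map pt)
      * F (pt α) (pt (α + 1))
      * pathProd G (pt (α + 1)) ((List.range' (α + 2) (n - α)).map pt)

lemma PiBlock_eq {A X : Type*} [Ring A] (P G S F : X → X → A) (r : X) (ts : List X) (s : X) :
    PiBlock P G S F r ts s
      = S1blk P G (fun i => (r :: (ts ++ [s])).getD i s) ts.length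
        - S2blk G S F (fun i => (r :: (ts ++ [s])).getD i s) ts.length := rfl

lemma PiFBlock_eq {A X : Type*} [Ring A] (S F G : X → X → A) (r : X) (ts : List X) (s : X) :
    PiFBlock S F G r ts s
      = SFblk S F G (fun i => (r :: (ts ++ [s])).getD i s) ts.length := rfl

lemma neg_one_pow_succ_mul {A : Type*} [Ring A] (k : ℕ) (z : A) :
    (-1 : A) ^ (k + 1) * z = -((-1 : A) ^ k * z) := by
  rw [pow_succ, mul_assoc, neg_one_mul, mul_neg]

lemma pullc {A : Type*} [Ring A] (u : A) (hu : ∀ a, u * a = a * u) (x y : A) :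
    x * (u * y) = u * (x * y) := by
  rw [← mul_assoc, ← hu, mul_assoc]

lemma algR {A : Type*} [Ring A] (c w : A) (hc : ∀ a, c * a = a * c)
    (hw : ∀ a, w * a = a * w) (k : ℕ) (Cα g y : A) :
    (-1 : A) ^ (k + 1) * (Cα * ((g + c * w) * y)) - (-1 : A) ^ (k + 1) * (Cα * (g * y))
      = -(c * (w * ((-1 : A) ^ k * (Cα * y)))) := by
  rw [add_mul, mul_add, mul_add, add_sub_cancel_left, mul_assoc c w y,
    pullc c hc Cα (w * y), pullc w hw Cα y, neg_one_pow_succ_mul,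
    pullc c hc ((-1 : A) ^ k), pullc w hw ((-1 : A) ^ k)]

lemma alg0 {A : Type*} [Ring A] (c w g y : A) :
    (g - c * w) * y - g * y = -(c * (w * y)) := by
  rw [sub_mul, sub_sub_cancel_left, mul_assoc]

lemma S1blk_normal {A X : Type*} [Ring A] (P G : X → X → A) (x q : ℕ → X) (m : ℕ)
    (hx : ∀ i, x (i + 1) = q i) :
    S1blk P G x (m + 1)
      = (∑ α ∈ Finset.range (m + 1),
          (-1 : A) ^ (α + 1) * (pathProd G (q α) ((List.range α).reverse.map q)
            * (G (q 0) (x 0) * (P (q α) (q (α + 1))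
              * pathProd G (q (α + 1)) ((List.range' (α + 2) (m - α)).map q)))))
        + P (x 0) (q 0) * pathProd G (q 0) ((List.range' 1 (m + 1)).map q) := by
  rw [S1blk, Finset.sum_range_succ']
  congr 1
  · refine Finset.sum_congr rfl (fun α _ => ?_)
    rw [revchain_split G x q hx α]
    simp only [hx, Nat.succ_sub_succ_eq_sub,
      show ∀ a : ℕ, a + 1 + 2 = a + 2 + 1 from fun a => by omega,
      show ∀ a : ℕ, a + 1 + 1 = a + 1 + 1 from fun a => rfl,
      range'_succ_map x q hx]
    simp only [mul_assoc]
  · simp only [pow_zero, one_mul, List.range_zero, List.reverse_nil, List.map_nil,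
      pathProd_nil, mul_one, Nat.sub_zero, Nat.zero_add,
      show (2 : ℕ) = 1 + 1 from rfl, range'_succ_map x q hx, hx]

lemma S1_diff {A X : Type*} [Ring A] (c w l : A) (P G : X → X → A)
    (ptσ ptr q : ℕ → X) (m : ℕ)
    (h1 : ∀ i, ptσ (i + 1) = q i) (h2 : ∀ i, ptr (i + 1) = q i)
    (hc : ∀ a, c * a = a * c) (hw : ∀ a, w * a = a * w)
    (hP : P (ptσ 0) (q 0) = P (ptr 0) (q 0) - c * l)
    (hG : G (q 0) (ptσ 0) = G (q 0) (ptr 0) + c * w) :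
    S1blk P G ptσ (m + 1) - S1blk P G ptr (m + 1)
      = -(c * (l * pathProd G (q 0) ((List.range' 1 (m + 1)).map q)))
        - c * (w * S1blk P G q m) := by
  rw [S1blk_normal P G ptσ q m h1, S1blk_normal P G ptr q m h2, hP, hG, add_sub_add_comm,
    ← Finset.sum_sub_distrib]
  have hsum : (∑ α ∈ Finset.range (m + 1),
      ((-1 : A) ^ (α + 1) * (pathProd G (q α) ((List.range α).reverse.map q)
          * ((G (q 0) (ptr 0) + c * w) * (P (q α) (q (α + 1))
            * pathProd G (q (α + 1)) ((List.range' (α + 2) (m - α)).map q))))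
        - (-1 : A) ^ (α + 1) * (pathProd G (q α) ((List.range α).reverse.map q)
          * (G (q 0) (ptr 0) * (P (q α) (q (α + 1))
            * pathProd G (q (α + 1)) ((List.range' (α + 2) (m - α)).map q))))))
      = -(c * (w * S1blk P G q m)) := by
    rw [Finset.sum_congr rfl (fun α _ => algR c w hc hw α _ _ _)]
    rw [Finset.sum_neg_distrib, ← Finset.mul_sum, ← Finset.mul_sum]
    congr 3
    rw [S1blk]
    exact Finset.sum_congr rfl (fun α _ => by simp only [mul_assoc])
  rw [hsum, alg0]
  abel

lemma S2blk_normal {A X : Type*} [Ring A] (G S F : X → X → A) (x q : ℕ → X) (m : ℕ)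
    (hx : ∀ i, x (i + 1) = q i) :
    S2blk G S F x (m + 1)
      = (∑ α ∈ Finset.range m, ∑ β ∈ Finset.range (m - α),
          (-1 : A) ^ (α + 1) * (pathProd G (q α) ((List.range α).reverse.map q)
            * (G (q 0) (x 0)
              * (F (q (α + 1)) (q α)
                * (pathProd S (q (α + 1)) ((List.range' (α + 2) β).map q)
                  * (F (q (α + β + 1)) (q (α + β + 2))
                    * pathProd G (q (α + β + 2))
                        ((List.range' (α + β + 3) (m - 1 - α - β)).map q)))))))
        + ∑ β ∈ Finset.range (m + 1),
            F (q 0) (x 0)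
              * (pathProd S (q 0) ((List.range' 1 β).map q)
                * (F (q β) (q (β + 1))
                  * pathProd G (q (β + 1)) ((List.range' (β + 2) (m - β)).map q))) := by
  rw [S2blk, Finset.sum_range_succ']
  congr 1
  · refine Finset.sum_congr rfl (fun α _ => ?_)
    refine Finset.sum_congr (congrArg Finset.range (by omega)) (fun β _ => ?_)
    rw [revchain_split G x q hx α]
    simp only [show ∀ a b : ℕ, a + 1 + b + 1 = (a + b + 1) + 1 from fun a b => by omega,
      show ∀ a b : ℕ, a + 1 + b + 2 = (a + b + 2) + 1 from fun a b => by omega,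
      show ∀ a b : ℕ, a + 1 + b + 3 = (a + b + 3) + 1 from fun a b => by omega,
      show ∀ a : ℕ, a + 1 + 2 = a + 2 + 1 from fun a => by omega,
      show ∀ (m a b : ℕ), m + 1 - 1 - (a + 1) - b = m - 1 - a - b from fun m a b => by omega,
      hx, range'_succ_map x q hx]
    simp only [mul_assoc]
  · refine Finset.sum_congr rfl (fun β _ => ?_)
    simp only [pow_zero, one_mul, List.range_zero, List.reverse_nil, List.map_nil,
      pathProd_nil, mul_one, Nat.zero_add,
      show (2 : ℕ) = 1 + 1 from rfl,
      show ∀ b : ℕ, b + 2 = (b + 1) + 1 from fun b => rfl,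
      show ∀ b : ℕ, b + 3 = (b + 2) + 1 from fun b => rfl,
      show ∀ (m b : ℕ), m + 1 - 1 - 0 - b = m - b from fun m b => by omega,
      hx, range'_succ_map x q hx]
    simp only [mul_assoc]

lemma S2_diff {A X : Type*} [Ring A] (c w wh : A) (G S F : X → X → A)
    (ptσ ptr q : ℕ → X) (m : ℕ)
    (h1 : ∀ i, ptσ (i + 1) = q i) (h2 : ∀ i, ptr (i + 1) = q i)
    (hc : ∀ a, c * a = a * c) (hw : ∀ a, w * a = a * w)
    (hF : F (q 0) (ptσ 0) = F (q 0) (ptr 0) - c * wh)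
    (hG : G (q 0) (ptσ 0) = G (q 0) (ptr 0) + c * w) :
    S2blk G S F ptσ (m + 1) - S2blk G S F ptr (m + 1)
      = -(c * (wh * SFblk S F G q m)) - c * (w * S2blk G S F q m) := by
  rw [S2blk_normal G S F ptσ q m h1, S2blk_normal G S F ptr q m h2, hF, hG, add_sub_add_comm,
    ← Finset.sum_sub_distrib, ← Finset.sum_sub_distrib]
  have hsum : (∑ α ∈ Finset.range m,
      (∑ β ∈ Finset.range (m - α),
        (-1 : A) ^ (α + 1) * (pathProd G (q α) ((List.range α).reverse.map q)
          * ((G (q 0) (ptr 0) + c * w)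
            * (F (q (α + 1)) (q α)
              * (pathProd S (q (α + 1)) ((List.range' (α + 2) β).map q)
                * (F (q (α + β + 1)) (q (α + β + 2))
                  * pathProd G (q (α + β + 2))
                      ((List.range' (α + β + 3) (m - 1 - α - β)).map q))))))
        - ∑ β ∈ Finset.range (m - α),
        (-1 : A) ^ (α + 1) * (pathProd G (q α) ((List.range α).reverse.map q)
          * (G (q 0) (ptr 0)
            * (F (q (α + 1)) (q α)
              * (pathProd S (q (α + 1)) ((List.range' (α + 2) β).map q)
                * (F (q (α + β + 1)) (q (α + β + 2))
                  * pathProd G (q (α + β + 2))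
                      ((List.range' (α + β + 3) (m - 1 - α - β)).map q))))))))
      = -(c * (w * S2blk G S F q m)) := by
    rw [Finset.sum_congr rfl (fun α _ => (Finset.sum_sub_distrib _ _).symm)]
    rw [Finset.sum_congr rfl (fun α _ =>
      Finset.sum_congr rfl (fun β _ => algR c w hc hw α _ _ _))]
    rw [Finset.sum_congr rfl (fun α _ => Finset.sum_neg_distrib _),
      Finset.sum_neg_distrib]
    rw [Finset.sum_congr rfl (fun α _ => (Finset.mul_sum _ _ _).symm)]
    rw [Finset.sum_congr rfl (fun α _ => congrArg (c * ·)
      (Finset.mul_sum _ _ _).symm)]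
    rw [← Finset.mul_sum, ← Finset.mul_sum]
    congr 3
    rw [S2blk]
    exact Finset.sum_congr rfl (fun α _ =>
      Finset.sum_congr rfl (fun β _ => by simp only [mul_assoc]))
  have h0 : (∑ β ∈ Finset.range (m + 1),
      ((F (q 0) (ptr 0) - c * wh)
          * (pathProd S (q 0) ((List.range' 1 β).map q)
            * (F (q β) (q (β + 1))
              * pathProd G (q (β + 1)) ((List.range' (β + 2) (m - β)).map q)))
        - F (q 0) (ptr 0)
          * (pathProd S (q 0) ((List.range' 1 β).map q)
            * (F (q β) (q (β + 1))
              * pathProd G (q (β + 1)) ((List.range' (β + 2) (m - β)).map q)))))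
      = -(c * (wh * SFblk S F G q m)) := by
    rw [Finset.sum_congr rfl (fun β _ => alg0 c wh _ _)]
    rw [Finset.sum_neg_distrib, ← Finset.mul_sum, ← Finset.mul_sum]
    congr 3
    rw [SFblk]
    exact Finset.sum_congr rfl (fun β _ => by simp only [mul_assoc])
  rw [hsum, h0]
  abel

/-- B-cycle monodromy of the fundamental chain block in its endpoint:
`Π^{(n+2)}(σr;t₁,…,tₙ;s) − Π^{(n+2)}(r;t₁,…,tₙ;s) = −c·Π_K^{(n+1)}(t₁;t₂,…,tₙ;s)`,
where `Π_K^{(n+1)}(t₁;t₂,…,tₙ;s) = λ_K(t₁) Gⁿ(t₁,…,tₙ,s) + ω_K(t₁) Π^{(n+1)}(t₁;t₂,…,tₙ;s)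
 − ω̂_K(t₁) Π_F^{(n+1)}(t₁;t₂,…,tₙ;s)`, given the monodromy rules
`P(σx,y) = P(x,y) − c λ_K(y)`, `G(x,σy) = G(x,y) + c ω_K(x)`,
`F(x,σy) = F(x,y) − c ω̂_K(x)`, in a ℤ/2-graded commutative ring with
`c, P, G, S, λ_K, ω_K` even (central), `P` symmetric, `S` antisymmetric, and
`F, ω̂_K` odd (pairwise anticommuting). -/
theorem PiBlock_monodromy {A X : Type*} [Ring A]
    (σ : X → X) (c : A) (P G S F : X → X → A) (lamK omK omhK : X → A)
    (hPsymm : ∀ x y, P x y = P y x)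
    (hSanti : ∀ x y, S x y = -S y x)
    (hccentral : ∀ a, c * a = a * c)
    (hPcentral : ∀ x y a, P x y * a = a * P x y)
    (hGcentral : ∀ x y a, G x y * a = a * G x y)
    (hScentral : ∀ x y a, S x y * a = a * S x y)
    (hlamcentral : ∀ x a, lamK x * a = a * lamK x)
    (homcentral : ∀ x a, omK x * a = a * omK x)
    (hFodd : ∀ x y z w, F x y * F z w = -(F z w * F x y))
    (homhodd : ∀ x y, omhK x * omhK y = -(omhK y * omhK x))
    (homhF : ∀ x z w, omhK x * F z w = -(F z w * omhK x))
    (hPmono : ∀ x y, P (σ x) y = P x y - c * lamK y)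
    (hGmono : ∀ x y, G x (σ y) = G x y + c * omK x)
    (hFmono : ∀ x y, F x (σ y) = F x y - c * omhK x)
    (r : X) (t1 : X) (rest : List X) (s : X) :
    PiBlock P G S F (σ r) (t1 :: rest) s - PiBlock P G S F r (t1 :: rest) s
      = -(c * (lamK t1 * pathProd G t1 (rest ++ [s])
          + omK t1 * PiBlock P G S F t1 rest s
          - omhK t1 * PiFBlock S F G t1 rest s)) := by
  rw [PiBlock_eq P G S F (σ r) (t1 :: rest) s, PiBlock_eq P G S F r (t1 :: rest) s,
    PiBlock_eq P G S F t1 rest s, PiFBlock_eq S F G t1 rest s]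
  simp only [List.length_cons, List.cons_append]
  set q : ℕ → X := fun i => (t1 :: (rest ++ [s])).getD i s with hqdef
  set pσ : ℕ → X := fun i => (σ r :: t1 :: (rest ++ [s])).getD i s with hpσ
  set pρ : ℕ → X := fun i => (r :: t1 :: (rest ++ [s])).getD i s with hpρ
  have h1 : ∀ i, pσ (i + 1) = q i := fun i => by simp [hpσ, hqdef]
  have h2 : ∀ i, pρ (i + 1) = q i := fun i => by simp [hpρ, hqdef]
  have e0σ : pσ 0 = σ r := rfl
  have e0ρ : pρ 0 = r := rfl
  have eq0 : q 0 = t1 := rfl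
  have hs1 := S1_diff c (omK t1) (lamK t1) P G pσ pρ q rest.length h1 h2 hccentral
    (homcentral t1) (by rw [e0σ, e0ρ, eq0]; exact hPmono r t1)
    (by rw [e0σ, e0ρ, eq0]; exact hGmono t1 r)
  have hs2 := S2_diff c (omK t1) (omhK t1) G S F pσ pρ q rest.length h1 h2 hccentral
    (homcentral t1) (by rw [e0σ, e0ρ, eq0]; exact hFmono t1 r)
    (by rw [e0σ, e0ρ, eq0]; exact hGmono t1 r)
  have hGC : pathProd G (q 0) ((List.range' 1 (rest.length + 1)).map q)
      = pathProd G t1 (rest ++ [s]) := by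
    rw [eq0]
    congr 1
    rw [List.range'_eq_map_range, List.map_map]
    have hmap : List.map (q ∘ fun x => 1 + x) (List.range (rest.length + 1))
        = List.map (fun i => (rest ++ [s]).getD i s) (List.range (rest.length + 1)) := by
      refine List.map_congr_left (fun i _ => ?_)
      simp [hqdef, Nat.add_comm 1 i]
    rw [hmap, show rest.length + 1 = (rest ++ [s]).length by simp, map_getD_range]
  rw [sub_sub_sub_comm, hs1, hs2, hGC]
  set GC := pathProd G t1 (rest ++ [s])
  set u1 := S1blk P G q rest.length
  set u2 := S2blk G S F q rest.length
  set uf := SFblk S F G q rest.length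
  noncomm_ring
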